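/- If a preordered space has a countable multi-utility, then it admits an injective monotone. -/
import Mathlib

/-- A preorder with a countable multi-utility admits an injective monotone. -/
theorem countable_multiutility_gives_injective_monotone {X : Type*} (le : X → X → Prop)
    (hrefl : ∀ x, le x x) (htrans : ∀ x y z, le x y → le y z → le x z)
    (u : ℕ → X → ℝ) (hu : ∀ x y, le x y ↔ ∀ n, u n x ≤ u n y) :
    ∃ f : X → ℝ, (∀ x y, le x y → f x ≤ f y) ∧
      (∀ x y, f x = f y → le x y ∧ le y x) := by
  classical
  let e : ℕ ≃ ℕ × ℚ := (Denumerable.eqv (ℕ × ℚ)).symm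
  set g : X → ℕ → Bool := fun x k => decide (((e k).2 : ℝ) < u (e k).1 x) with hg
  have h13 : (0:ℝ) ≤ 1/3 := by norm_num
  have h13' : (1:ℝ)/3 < 1 := by norm_num
  refine ⟨fun x => Cardinal.cantorFunction (1/3) (g x), ?_, ?_⟩
  · intro x y hxy
    apply Cardinal.cantorFunction_le h13 h13'
    intro k hk
    simp only [hg, decide_eq_true_eq] at hk ⊢
    exact lt_of_lt_of_le hk ((hu x y).mp hxy (e k).1)
  · intro x y hxy
    have hgeq : g x = g y :=
      Cardinal.cantorFunction_injective (by norm_num) (by norm_num) hxy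
    have key : ∀ a b : X, g a = g b → le a b := by
      intro a b hab
      rw [hu]
      intro n
      by_contra h
      push_neg at h
      obtain ⟨q, hq1, hq2⟩ := exists_rat_btwn h
      have := congrFun hab (e.symm (n, q))
      simp only [hg, Equiv.apply_symm_apply, decide_eq_decide] at this
      exact absurd (this.mp hq2) (not_lt.mpr hq1.le)
    exact ⟨key x y hgeq, key y x hgeq.symm⟩
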